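/- Let M be a real symmetric positive definite n×n matrix and v ∈ ℝⁿ a nonzero vector, and set p = M v and R_p = M⁻¹ − (v vᵀ)/(vᵀ M v). Then a vector w ∈ ℝⁿ satisfies R_p w = 0 if and only if w is a scalar multiple of p; that is, the kernel of R_p is exactly the span of p = M v. -/

import Mathlib

open Matrix

noncomputable section

/-- `R_p = M⁻¹ − (v vᵀ)/(vᵀ M v)`. -/
def Rp {n : ℕ} (M : Matrix (Fin n) (Fin n) ℝ) (v : Fin n → ℝ) : Matrix (Fin n) (Fin n) ℝ :=
  M⁻¹ - (v ⬝ᵥ M.mulVec v)⁻¹ • vecMulVec v v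

lemma vecMulVec_mulVec' {n : ℕ} (u v w : Fin n → ℝ) :
    (vecMulVec u v).mulVec w = (v ⬝ᵥ w) • u := by
  funext i
  simp [vecMulVec, mulVec, dotProduct, Finset.mul_sum, mul_comm, mul_assoc, mul_left_comm]

/-- for `M` symmetric positive definite and `v ≠ 0`, the kernel of
`R_p = M⁻¹ − (v vᵀ)/(vᵀ M v)` is exactly the span of `p = M v`. -/
theorem kernel_Rp_eq_span_p {n : ℕ} (M : Matrix (Fin n) (Fin n) ℝ) (hM : M.PosDef)
    (v : Fin n → ℝ) (hv : v ≠ 0) :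
    ∀ w : Fin n → ℝ, (Rp M v).mulVec w = 0 ↔ ∃ c : ℝ, w = c • M.mulVec v := by
  intro w
  have hq : (0:ℝ) < v ⬝ᵥ M.mulVec v := by
    have := hM.dotProduct_mulVec_pos hv
    simpa using this
  have hq0 : v ⬝ᵥ M.mulVec v ≠ 0 := ne_of_gt hq
  have hdet : IsUnit M.det := isUnit_iff_ne_zero.mpr (ne_of_gt hM.det_pos)
  have hMinv : M * M⁻¹ = 1 := Matrix.mul_nonsing_inv M hdet
  have key : (Rp M v).mulVec w
      = M⁻¹.mulVec w - ((v ⬝ᵥ M.mulVec v)⁻¹ * (v ⬝ᵥ w)) • v := by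
    simp [Rp, Matrix.sub_mulVec, Matrix.smul_mulVec, vecMulVec_mulVec',
      smul_smul]
  constructor
  · intro h
    rw [key, sub_eq_zero] at h
    refine ⟨(v ⬝ᵥ M.mulVec v)⁻¹ * (v ⬝ᵥ w), ?_⟩
    have := congrArg M.mulVec h
    rw [Matrix.mulVec_mulVec, hMinv] at this
    simpa [Matrix.mulVec_smul] using this
  · rintro ⟨c, rfl⟩
    rw [key]
    have h1 : M⁻¹.mulVec (c • M.mulVec v) = c • v := by
      rw [Matrix.mulVec_smul, Matrix.mulVec_mulVec, Matrix.nonsing_inv_mul M hdet]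
      simp
    have h2 : v ⬝ᵥ (c • M.mulVec v) = c * (v ⬝ᵥ M.mulVec v) := by
      simp [dotProduct_smul, mul_comm]
    rw [h1, h2]
    field_simp
    simp

end
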